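/- Let γ = (γ_1,…,γ_n) be a weak composition. A filling F ∈ SetSkyFill(γ) has content γ if and only if F(i,j) = {i} for every box (i,j) with 1 ≤ j ≤ γ_i. In particular, there is exactly one element of SetSkyFill(γ) whose content equals γ. -/
import Mathlib


open Finset MvPolynomial

/-- The inversion-triple condition on anchor values `b, a, c`:
`b > c ≥ a` or `c ≥ a > b`. -/
def InvTriple (b a c : ℕ) : Prop := (c < b ∧ a ≤ c) ∨ (a ≤ c ∧ b < a)

/-- A set-valued skyline filling of shape `γ` (row `i : Fin n` is the `(i+1)`-st row) with
basement `b_i = i`: box `(i, j)` for `1 ≤ j ≤ γ i` carries a nonempty finite set of positive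
integers, box `(i, 0)` is the basement `{i + 1}`, and boxes outside the shape are empty. -/
structure SVFilling (n : ℕ) (γ : Fin n → ℕ) where
  box : Fin n → ℕ → Finset ℕ
  basement : ∀ i : Fin n, box i 0 = {(i : ℕ) + 1}
  nonempty : ∀ i : Fin n, ∀ j : ℕ, 1 ≤ j → j ≤ γ i → (box i j).Nonempty
  pos : ∀ i : Fin n, ∀ j : ℕ, ∀ e ∈ box i j, 1 ≤ e
  outside : ∀ i : Fin n, ∀ j : ℕ, γ i < j → box i j = ∅

namespace SVFilling

variable {n : ℕ} {γ : Fin n → ℕ}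

/-- The anchor (= largest) entry of box `(i, j)`. -/
def anchor (F : SVFilling n γ) (i : Fin n) (j : ℕ) : ℕ := (F.box i j).sup id

/-- Semistandardness conditions (S1)-(S4). -/
def IsSemistandard (F : SVFilling n γ) : Prop :=
  (∀ j : ℕ, 1 ≤ j → ∀ i i' : Fin n, i ≠ i' → ∀ e : ℕ, e ∈ F.box i j → e ∉ F.box i' j) ∧
  (∀ i : Fin n, ∀ j : ℕ, 1 ≤ j → j ≤ γ i →
      ∀ a ∈ F.box i (j - 1), ∀ b ∈ F.box i j, b ≤ a) ∧
  (∀ i i' : Fin n, i < i' →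
      (γ i' ≤ γ i → ∀ m : ℕ, m + 1 ≤ γ i' →
        InvTriple (F.anchor i' (m + 1)) (F.anchor i (m + 1)) (F.anchor i m)) ∧
      (γ i < γ i' → ∀ m : ℕ, m ≤ γ i → m + 1 ≤ γ i' →
        InvTriple (F.anchor i m) (F.anchor i' (m + 1)) (F.anchor i' m))) ∧
  (∀ i : Fin n, ∀ j : ℕ, 1 ≤ j → j ≤ γ i → ∀ e ∈ F.box i j, e ≠ F.anchor i j →
      ∀ i' : Fin n, i' < i → j ≤ γ i' →
        ¬ (e < F.anchor i' j ∧ (j = γ i' ∨ F.anchor i' (j + 1) ≤ e)))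

/-- `F.content v` is the number of (non-basement) boxes of `F` containing the value `v`. -/
def content (F : SVFilling n γ) (v : ℕ) : ℕ :=
  ∑ i : Fin n, ((Finset.Icc 1 (γ i)).filter (fun j => v ∈ F.box i j)).card

/-- `|F|`, the total number of entries of `F` (with multiplicity over boxes). -/
def size (F : SVFilling n γ) : ℕ :=
  ∑ i : Fin n, ∑ j ∈ Finset.Icc 1 (γ i), (F.box i j).card

/-- `F` has content the weak composition `δ` with `n` parts. -/
def HasContent (F : SVFilling n γ) (δ : Fin n → ℕ) : Prop :=
  (∀ i : Fin n, F.content ((i : ℕ) + 1) = δ i) ∧ ∀ v : ℕ, n < v → F.content v = 0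

end SVFilling

/-- The (combinatorial) Lascoux atom `L_γ ∈ ℤ[β][x_1, …, x_n]`, where `β` is the polynomial
variable of `ℤ[β] = Polynomial ℤ`. -/
noncomputable def Lascoux (n : ℕ) (γ : Fin n → ℕ) : MvPolynomial (Fin n) (Polynomial ℤ) :=
  ∑ᶠ F : {F : SVFilling n γ // F.IsSemistandard},
    MvPolynomial.monomial
      (Finsupp.equivFunOnFinite.symm
        (fun i : Fin n => (F : SVFilling n γ).content ((i : ℕ) + 1)))
      (Polynomial.X ^ ((F : SVFilling n γ).size - ∑ i, γ i))


namespace Stmt1Aux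

open SVFilling

variable {n : ℕ} {γ : Fin n → ℕ}

/-- Entries of row `i` (within the shape) are at most `i + 1`. -/
lemma row_bound (F : SVFilling n γ) (hss : F.IsSemistandard) (i : Fin n) :
    ∀ j, j ≤ γ i → ∀ e ∈ F.box i j, e ≤ (i : ℕ) + 1 := by
  intro j
  induction j with
  | zero =>
    intro _ e he
    rw [F.basement] at he
    simp only [Finset.mem_singleton] at he
    omega
  | succ j ih =>
    intro hj e he
    obtain ⟨a, ha⟩ : (F.box i j).Nonempty := by
      rcases Nat.eq_zero_or_pos j with h0 | h0
      · subst h0; rw [F.basement]; exact ⟨_, Finset.mem_singleton_self _⟩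
      · exact F.nonempty i j h0 (by omega)
    have hle := hss.2.1 i (j + 1) (by omega) hj a (by simpa using ha) e he
    exact le_trans hle (ih (by omega) a ha)

lemma sum_content_eq_size (F : SVFilling n γ) (hss : F.IsSemistandard) :
    ∑ v ∈ Finset.Icc 1 n, F.content v = F.size := by
  unfold SVFilling.content SVFilling.size
  rw [Finset.sum_comm]
  refine Finset.sum_congr rfl fun i _ => ?_
  simp_rw [Finset.card_filter]
  rw [Finset.sum_comm]
  refine Finset.sum_congr rfl fun j hj => ?_
  rw [← Finset.card_filter, Finset.filter_mem_eq_inter, Finset.inter_eq_right.mpr]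
  intro e he
  have h1 := F.pos i j e he
  have h2 := row_bound F hss i j (Finset.mem_Icc.mp hj).2 e he
  have h3 := i.isLt
  exact Finset.mem_Icc.mpr ⟨h1, by omega⟩

lemma card_one (F : SVFilling n γ) (hss : F.IsSemistandard) (hc : F.HasContent γ) :
    ∀ i : Fin n, ∀ j ∈ Finset.Icc 1 (γ i), (F.box i j).card = 1 := by
  have h1 : ∑ v ∈ Finset.Icc 1 n, F.content v = ∑ i : Fin n, γ i := by
    rw [← Finset.Ico_add_one_right_eq_Icc, Finset.sum_Ico_eq_sum_range]
    rw [← Fin.sum_univ_eq_sum_range (fun k => F.content (1 + k))]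
    exact Finset.sum_congr rfl fun i _ => by rw [Nat.add_comm]; exact hc.1 i
  have hsz : ∑ i : Fin n, γ i = F.size := by
    rw [← h1, sum_content_eq_size F hss]
  unfold SVFilling.size at hsz
  have hle : ∀ i ∈ Finset.univ (α := Fin n),
      γ i ≤ ∑ j ∈ Finset.Icc 1 (γ i), (F.box i j).card := by
    intro i _
    calc γ i = ∑ _j ∈ Finset.Icc 1 (γ i), 1 := by simp
    _ ≤ _ := Finset.sum_le_sum fun j hj =>
        Finset.card_pos.mpr (F.nonempty i j (Finset.mem_Icc.mp hj).1 (Finset.mem_Icc.mp hj).2)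
  have hrow := (Finset.sum_eq_sum_iff_of_le hle).mp hsz
  intro i j hj
  have hle2 : ∀ j ∈ Finset.Icc 1 (γ i), 1 ≤ (F.box i j).card := fun j hj =>
    Finset.card_pos.mpr (F.nonempty i j (Finset.mem_Icc.mp hj).1 (Finset.mem_Icc.mp hj).2)
  have heq : ∑ _j ∈ Finset.Icc 1 (γ i), 1 = ∑ j ∈ Finset.Icc 1 (γ i), (F.box i j).card := by
    rw [← hrow i (Finset.mem_univ i)]; simp
  exact ((Finset.sum_eq_sum_iff_of_le hle2).mp heq j hj).symm

lemma fwd (F : SVFilling n γ) (hss : F.IsSemistandard) (hc : F.HasContent γ) :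
    ∀ i : Fin n, ∀ j : ℕ, 1 ≤ j → j ≤ γ i → F.box i j = {(i : ℕ) + 1} := by
  have hcard := card_one F hss hc
  suffices H : ∀ k : ℕ, ∀ i : Fin n, n - (i : ℕ) ≤ k →
      ∀ j, 1 ≤ j → j ≤ γ i → F.box i j = {(i : ℕ) + 1} by
    exact fun i => H n i (by omega)
  intro k
  induction k with
  | zero =>
    intro i hi
    have := i.isLt
    omega
  | succ k ih =>
    intro i hi
    have IH : ∀ i' : Fin n, (i : ℕ) < (i' : ℕ) →
        ∀ j, 1 ≤ j → j ≤ γ i' → F.box i' j = {(i' : ℕ) + 1} := by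
      intro i' h
      exact ih i' (by have := i'.isLt; omega)
    have hone : F.content ((i : ℕ) + 1)
        = ((Finset.Icc 1 (γ i)).filter (fun j => (i : ℕ) + 1 ∈ F.box i j)).card := by
      unfold SVFilling.content
      refine Finset.sum_eq_single_of_mem i (Finset.mem_univ i) ?_
      intro i' _ hne
      rw [Finset.card_eq_zero, Finset.filter_eq_empty_iff]
      intro j hj hmem
      rcases lt_or_gt_of_ne hne with hlt | hgt
      · have hb := row_bound F hss i' j (Finset.mem_Icc.mp hj).2 _ hmem
        have hlt' : (i' : ℕ) < (i : ℕ) := hlt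
        omega
      · have hx := IH i' hgt j (Finset.mem_Icc.mp hj).1 (Finset.mem_Icc.mp hj).2
        rw [hx, Finset.mem_singleton] at hmem
        have hgt' : (i : ℕ) < (i' : ℕ) := hgt
        omega
    have hfull : (Finset.Icc 1 (γ i)).filter (fun j => (i : ℕ) + 1 ∈ F.box i j)
        = Finset.Icc 1 (γ i) := by
      apply Finset.eq_of_subset_of_card_le (Finset.filter_subset _ _)
      rw [← hone, hc.1 i, Nat.card_Icc]
      omega
    intro j h1 h2
    have hmem : (i : ℕ) + 1 ∈ F.box i j := by
      have hj' : j ∈ (Finset.Icc 1 (γ i)).filter (fun j => (i : ℕ) + 1 ∈ F.box i j) := by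
        rw [hfull]; exact Finset.mem_Icc.mpr ⟨h1, h2⟩
      exact (Finset.mem_filter.mp hj').2
    obtain ⟨a, ha⟩ := Finset.card_eq_one.mp (hcard i j (Finset.mem_Icc.mpr ⟨h1, h2⟩))
    rw [ha] at hmem ⊢
    rw [Finset.mem_singleton] at hmem
    rw [hmem]

lemma bwd (F : SVFilling n γ)
    (hall : ∀ i : Fin n, ∀ j : ℕ, 1 ≤ j → j ≤ γ i → F.box i j = {(i : ℕ) + 1}) :
    F.HasContent γ := by
  constructor
  · intro i
    unfold SVFilling.content
    have h0 : ∀ i' ∈ Finset.univ (α := Fin n), i' ≠ i →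
        ((Finset.Icc 1 (γ i')).filter (fun j => (i : ℕ) + 1 ∈ F.box i' j)).card = 0 := by
      intro i' _ hne
      rw [Finset.card_eq_zero, Finset.filter_eq_empty_iff]
      intro j hj hmem
      rw [hall i' j (Finset.mem_Icc.mp hj).1 (Finset.mem_Icc.mp hj).2,
        Finset.mem_singleton] at hmem
      exact hne (Fin.ext (by omega))
    rw [Finset.sum_eq_single_of_mem i (Finset.mem_univ i) h0,
      Finset.filter_true_of_mem, Nat.card_Icc]
    · omega
    · intro j hj
      rw [hall i j (Finset.mem_Icc.mp hj).1 (Finset.mem_Icc.mp hj).2]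
      simp
  · intro v hv
    unfold SVFilling.content
    apply Finset.sum_eq_zero
    intro i _
    rw [Finset.card_eq_zero, Finset.filter_eq_empty_iff]
    intro j hj hmem
    rw [hall i j (Finset.mem_Icc.mp hj).1 (Finset.mem_Icc.mp hj).2,
      Finset.mem_singleton] at hmem
    have := i.isLt
    omega

/-- The trivial filling: every box in the shape is `{i + 1}`. -/
def triv (n : ℕ) (γ : Fin n → ℕ) : SVFilling n γ where
  box i j := if j ≤ γ i then {(i : ℕ) + 1} else ∅
  basement i := by simp
  nonempty i j _ h2 := by simp [h2]
  pos i j e he := by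
    by_cases h : j ≤ γ i <;> simp [h] at he
    omega
  outside i j h := by simp [Nat.not_le.mpr h]

lemma triv_anchor (i : Fin n) (j : ℕ) :
    (triv n γ).anchor i j = if j ≤ γ i then (i : ℕ) + 1 else 0 := by
  unfold SVFilling.anchor triv
  by_cases h : j ≤ γ i <;> simp [h]

lemma triv_ss : (triv n γ).IsSemistandard := by
  refine ⟨?_, ?_, ?_, ?_⟩
  · intro j _ i i' hne e he he'
    by_cases h : j ≤ γ i <;> simp [triv, h] at he
    by_cases h' : j ≤ γ i' <;> simp [triv, h'] at he'
    exact hne (Fin.ext (by omega))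
  · intro i j h1 h2 a ha b hb
    have hj1 : j - 1 ≤ γ i := by omega
    simp [triv, hj1] at ha
    simp [triv, h2] at hb
    omega
  · intro i i' hii'
    have hlt : (i : ℕ) < (i' : ℕ) := hii'
    constructor
    · intro hγ m hm
      rw [triv_anchor, triv_anchor, triv_anchor,
        if_pos hm, if_pos (le_trans hm hγ), if_pos (by omega : m ≤ γ i)]
      exact Or.inl ⟨by omega, le_refl _⟩
    · intro _ m hm hm'
      rw [triv_anchor, triv_anchor, triv_anchor,
        if_pos hm, if_pos hm', if_pos (by omega : m ≤ γ i')]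
      exact Or.inr ⟨le_refl _, by omega⟩
  · intro i j _ h2 e he hne i' _ _
    simp [triv, h2] at he
    rw [triv_anchor, if_pos h2] at hne
    exact absurd he hne

lemma ext' (F G : SVFilling n γ) (h : ∀ i j, F.box i j = G.box i j) : F = G := by
  have hb : F.box = G.box := funext fun i => funext fun j => h i j
  cases F; cases G
  cases hb
  rfl

end Stmt1Aux

/-- A semistandard set-valued skyline filling of shape `γ` has content `γ`
iff every box of the shape equals the singleton `{i}` (row index `i`, here `(i:ℕ)+1` since
rows are `0`-indexed by `Fin n`); and there is exactly one semistandard filling of shape `γ`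
with content `γ`. -/
theorem stmt1 (n : ℕ) (hn : 1 ≤ n) (γ : Fin n → ℕ) :
    (∀ F : SVFilling n γ, F.IsSemistandard →
      (F.HasContent γ ↔
        ∀ i : Fin n, ∀ j : ℕ, 1 ≤ j → j ≤ γ i → F.box i j = {(i : ℕ) + 1})) ∧
    (∃! F : {F : SVFilling n γ // F.IsSemistandard},
      (F : SVFilling n γ).HasContent γ) := by
  refine ⟨fun F hss => ⟨fun hc => Stmt1Aux.fwd F hss hc, fun hall => Stmt1Aux.bwd F hall⟩, ?_⟩
  refine ⟨⟨Stmt1Aux.triv n γ, Stmt1Aux.triv_ss⟩, ?_, ?_⟩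
  · exact Stmt1Aux.bwd _ (fun i j _ h2 => by simp [Stmt1Aux.triv, h2])
  · rintro ⟨G, hG⟩ hc
    apply Subtype.ext
    apply Stmt1Aux.ext'
    intro i j
    rcases Nat.eq_zero_or_pos j with h0 | h0
    · subst h0; rw [G.basement, (Stmt1Aux.triv n γ).basement]
    by_cases hj : j ≤ γ i
    · rw [Stmt1Aux.fwd G hG hc i j h0 hj]; simp [Stmt1Aux.triv, hj]
    · rw [G.outside i j (by omega), (Stmt1Aux.triv n γ).outside i j (by omega)]
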